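/- arXiv:1410.6351 — 6 statements merged into one kernel-verified Lean document; each statement's English description precedes it below -/
import Mathlib

section
/- For all real numbers a₁, a₂ ≥ 0 with (a₁ - a₂)^2 ≤ a₁ + a₂ and a₁ + a₂ > 0, and all real x₁, x₂ > 0, one has x₁^{a₁} x₂^{a₂} + x₂^{a₁} x₁^{a₂} ≤ 2^{1 - a₁ - a₂} (x₁ + x₂)^{a₁ + a₂}. -/
open Real Set

private lemma hasDerivAt_A (d t : ℝ) (ht : -1 < t) :
    HasDerivAt (fun t : ℝ => (1 + t) ^ d) (d * (1 + t) ^ (d - 1)) t := by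
  have h1 : HasDerivAt (fun t : ℝ => 1 + t) 1 t := (hasDerivAt_id t).const_add 1
  have h2 := (Real.hasDerivAt_rpow_const (x := 1 + t) (p := d)
    (Or.inl (ne_of_gt (by linarith)))).comp t h1
  simpa [Function.comp_def] using h2

private lemma hasDerivAt_B (d t : ℝ) (ht : t < 1) :
    HasDerivAt (fun t : ℝ => (1 - t) ^ d) (-(d * (1 - t) ^ (d - 1))) t := by
  have h1 : HasDerivAt (fun t : ℝ => 1 - t) (-1) t := (hasDerivAt_id t).const_sub 1
  have hne : (1 : ℝ) - t ≠ 0 := by intro hh; nlinarith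
  have h2 := (Real.hasDerivAt_rpow_const (x := 1 - t) (p := d) (Or.inl hne)).comp t h1
  simpa [Function.comp_def] using h2

private lemma inner_claim (d : ℝ) (hd : 1 ≤ d) (v : ℝ) (hv0 : 0 ≤ v) (hv1 : v < 1) :
    (1 + v) ^ d - (1 - v) ^ d ≤ d * v * ((1 + v) ^ d + (1 - v) ^ d) := by
  set ψ : ℝ → ℝ := fun t => d * t * ((1 + t) ^ d + (1 - t) ^ d) - ((1 + t) ^ d - (1 - t) ^ d)
    with hψdef
  have hcA : Continuous fun t : ℝ => (1 + t) ^ d :=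
    (continuous_const.add continuous_id).rpow_const (fun x => Or.inr (by linarith))
  have hcB : Continuous fun t : ℝ => (1 - t) ^ d :=
    (continuous_const.sub continuous_id).rpow_const (fun x => Or.inr (by linarith))
  have hcψ : Continuous ψ := by
    apply Continuous.sub
    · exact (continuous_const.mul continuous_id).mul (hcA.add hcB)
    · exact hcA.sub hcB
  have hder : ∀ t ∈ Ioo (0:ℝ) v, HasDerivAt ψ
      (d * ((1+t)^d + (1-t)^d) + (d*t) * (d * (1+t)^(d-1) + -(d * (1-t)^(d-1)))
        - (d * (1+t)^(d-1) - -(d * (1-t)^(d-1)))) t := by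
    intro t ht
    have ht1 : -1 < t := by linarith [ht.1]
    have ht2 : t < 1 := lt_trans ht.2 hv1
    have hA := hasDerivAt_A d t ht1
    have hB := hasDerivAt_B d t ht2
    have h1 : HasDerivAt (fun t : ℝ => d * t) d t := by
      simpa using (hasDerivAt_id t).const_mul d
    exact (h1.mul (hA.add hB)).sub (hA.sub hB)
  have hnonneg : ∀ t ∈ Ioo (0:ℝ) v,
      0 ≤ d * ((1+t)^d + (1-t)^d) + (d*t) * (d * (1+t)^(d-1) + -(d * (1-t)^(d-1)))
        - (d * (1+t)^(d-1) - -(d * (1-t)^(d-1))) := by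
    intro t ht
    have ht1 : (0:ℝ) < 1 + t := by linarith [ht.1]
    have ht2 : (0:ℝ) < 1 - t := by nlinarith [ht.2]
    have hPQ : (1 - t)^(d-1) ≤ (1 + t)^(d-1) :=
      Real.rpow_le_rpow ht2.le (by linarith [ht.1]) (by linarith)
    have hQ0 : (0:ℝ) ≤ (1 - t)^(d-1) := Real.rpow_nonneg ht2.le _
    have hAeq : (1+t)^d = (1+t)^(d-1) * (1+t) := by
      rw [← Real.rpow_add_one ht1.ne' (d-1)]; ring_nf
    have hBeq : (1-t)^d = (1-t)^(d-1) * (1-t) := by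
      rw [← Real.rpow_add_one ht2.ne' (d-1)]; ring_nf
    rw [hAeq, hBeq]
    nlinarith [mul_nonneg (mul_nonneg (by linarith : (0:ℝ) ≤ d) ht.1.le)
      (sub_nonneg.2 hPQ), sq_nonneg d]
  have hmono : MonotoneOn ψ (Icc 0 v) := by
    apply monotoneOn_of_deriv_nonneg (convex_Icc 0 v) hcψ.continuousOn
    · intro t ht
      rw [interior_Icc] at ht
      exact (hder t ht).differentiableAt.differentiableWithinAt
    · intro t ht
      rw [interior_Icc] at ht
      rw [(hder t ht).deriv]
      exact hnonneg t ht
  have h0 : ψ 0 = 0 := by simp [hψdef]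
  have hv : ψ 0 ≤ ψ v := hmono (left_mem_Icc.2 hv0) (right_mem_Icc.2 hv0) hv0
  rw [h0] at hv
  simp only [hψdef] at hv
  linarith

private lemma lemK (m d : ℝ) (hm : 0 ≤ m) (hd : 0 ≤ d) (hcond : d^2 ≤ 2*m + d)
    (u : ℝ) (hu0 : 0 ≤ u) (hu1 : u < 1) :
    (1 - u^2)^m * ((1+u)^d + (1-u)^d) ≤ 2 := by
  have h1u : (0:ℝ) < 1 + u := by linarith
  have h2u : (0:ℝ) < 1 - u := by linarith
  have hABnn : (0:ℝ) ≤ (1+u)^d + (1-u)^d := by positivity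
  rcases le_or_gt d 1 with hd1 | hd1
  · -- easy case d ≤ 1
    have h1 : (1 - u^2)^m ≤ 1 := Real.rpow_le_one (by nlinarith) (by nlinarith) hm
    have h2 : (1+u)^d + (1-u)^d ≤ 2 := by
      have hc := (Real.concaveOn_rpow hd hd1).2 (mem_Ici.2 h1u.le) (mem_Ici.2 h2u.le)
        (by norm_num : (0:ℝ) ≤ 1/2) (by norm_num : (0:ℝ) ≤ 1/2) (by norm_num)
      simp only [smul_eq_mul] at hc
      have he : (1:ℝ)/2 * (1+u) + 1/2 * (1-u) = 1 := by ring
      rw [he, Real.one_rpow] at hc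
      linarith
    calc (1 - u^2)^m * ((1+u)^d + (1-u)^d) ≤ 1 * 2 :=
          mul_le_mul h1 h2 hABnn one_pos.le
      _ = 2 := by norm_num
  · -- hard case d > 1
    have hm' : d*(d-1) ≤ 2*m := by nlinarith
    set g : ℝ → ℝ := fun t => (1 - t^2)^m * ((1+t)^d + (1-t)^d) with hgdef
    have hcA : Continuous fun t : ℝ => (1 + t) ^ d :=
      (continuous_const.add continuous_id).rpow_const (fun x => Or.inr (by linarith))
    have hcB : Continuous fun t : ℝ => (1 - t) ^ d :=
      (continuous_const.sub continuous_id).rpow_const (fun x => Or.inr (by linarith))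
    have hcM : Continuous fun t : ℝ => (1 - t^2) ^ m :=
      (continuous_const.sub (continuous_pow 2)).rpow_const (fun x => Or.inr hm)
    have hcg : Continuous g := hcM.mul (hcA.add hcB)
    have hder : ∀ t ∈ Ioo (0:ℝ) u, HasDerivAt g
        ((m * (1-t^2)^(m-1) * (-(2*t))) * ((1+t)^d + (1-t)^d)
          + (1-t^2)^m * (d * (1+t)^(d-1) + -(d * (1-t)^(d-1)))) t := by
      intro t ht
      have ht1 : -1 < t := by linarith [ht.1]
      have ht2 : t < 1 := lt_trans ht.2 hu1
      have hmm : (0:ℝ) < 1 - t^2 := by nlinarith [ht.1]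
      have hA := hasDerivAt_A d t ht1
      have hB := hasDerivAt_B d t ht2
      have hin : HasDerivAt (fun t : ℝ => 1 - t^2) (-(2*t)) t := by
        simpa using (hasDerivAt_pow 2 t).const_sub 1
      have hM := (Real.hasDerivAt_rpow_const (x := 1 - t^2) (p := m)
        (Or.inl hmm.ne')).comp t hin
      exact (hM.mul (hA.add hB))
    have hnonpos : ∀ t ∈ Ioo (0:ℝ) u,
        (m * (1-t^2)^(m-1) * (-(2*t))) * ((1+t)^d + (1-t)^d)
          + (1-t^2)^m * (d * (1+t)^(d-1) + -(d * (1-t)^(d-1))) ≤ 0 := by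
      intro t ht
      have ht1 : (0:ℝ) < 1 + t := by linarith [ht.1]
      have ht2 : (0:ℝ) < 1 - t := by nlinarith [lt_trans ht.2 hu1]
      have hmm : (0:ℝ) < 1 - t^2 := by nlinarith
      have hPQ := inner_claim d hd1.le t ht.1.le (lt_trans ht.2 hu1)
      have hMeq : (1-t^2)^m = (1-t^2)^(m-1) * (1-t^2) := by
        rw [← Real.rpow_add_one hmm.ne' (m-1)]; ring_nf
      have hAeq : (1+t)^d = (1+t)^(d-1) * (1+t) := by
        rw [← Real.rpow_add_one ht1.ne' (d-1)]; ring_nf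
      have hBeq : (1-t)^d = (1-t)^(d-1) * (1-t) := by
        rw [← Real.rpow_add_one ht2.ne' (d-1)]; ring_nf
      set R := (1-t^2)^(m-1) with hR
      set P := (1+t)^(d-1) with hP
      set Q := (1-t)^(d-1) with hQ
      have hR0 : 0 ≤ R := Real.rpow_nonneg hmm.le _
      have hP0 : 0 ≤ P := Real.rpow_nonneg ht1.le _
      have hQ0 : 0 ≤ Q := Real.rpow_nonneg ht2.le _
      set A := (1+t)^d with hA
      set B := (1-t)^d with hB
      have hA0 : 0 ≤ A := Real.rpow_nonneg ht1.le _
      have hB0 : 0 ≤ B := Real.rpow_nonneg ht2.le _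
      -- bracket:  -2*t*m*(A+B) + d*(A-B) - d*t*(A+B) ≤ 0
      have hdPQ : d * (A - B) ≤ d * (d * t * (A + B)) :=
        mul_le_mul_of_nonneg_left hPQ hd
      have h5 : 0 ≤ t*((A+B)*(2*m - d*(d-1))) :=
        mul_nonneg ht.1.le (mul_nonneg (by linarith) (by linarith))
      have hW : -2*t*m*(A+B) + d*((1-t)*A - (1+t)*B) ≤ 0 := by nlinarith [hdPQ, h5]
      -- expression equals R * (that bracket)
      have hexpr : (m * R * (-(2*t))) * (A + B) + (1-t^2)^m * (d * P + -(d * Q))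
          = R * (-2*t*m*(A+B) + d*((1-t)*A - (1+t)*B)) := by
        rw [hMeq, hAeq, hBeq]; ring
      rw [hexpr]
      exact mul_nonpos_of_nonneg_of_nonpos hR0 hW
    have hanti : AntitoneOn g (Icc 0 u) := by
      apply antitoneOn_of_deriv_nonpos (convex_Icc 0 u) hcg.continuousOn
      · intro t ht
        rw [interior_Icc] at ht
        exact (hder t ht).differentiableAt.differentiableWithinAt
      · intro t ht
        rw [interior_Icc] at ht
        rw [(hder t ht).deriv]
        exact hnonpos t ht
    have := hanti (left_mem_Icc.2 hu0) (right_mem_Icc.2 hu0) hu0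
    have h0 : g 0 = 2 := by norm_num [hgdef]
    rw [h0] at this
    simpa [hgdef] using this

private lemma key (m d : ℝ) (hm : 0 ≤ m) (hd : 0 ≤ d) (hcond : d^2 ≤ 2*m + d)
    (x₁ x₂ : ℝ) (hx₁ : 0 < x₁) (hx₂ : 0 < x₂) (hxx : x₂ ≤ x₁) :
    x₁^(m+d) * x₂^m + x₂^(m+d) * x₁^m ≤ 2^(1-(2*m+d)) * (x₁+x₂)^(2*m+d) := by
  set σ := (x₁+x₂)/2 with hσ
  have hσpos : 0 < σ := by positivity
  set u := (x₁-x₂)/(x₁+x₂) with hu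
  have hsum : (0:ℝ) < x₁ + x₂ := by linarith
  have hu0 : 0 ≤ u := div_nonneg (by linarith) hsum.le
  have hu1 : u < 1 := by rw [hu, div_lt_one hsum]; linarith
  have h1u : (0:ℝ) < 1 + u := by linarith
  have h2u : (0:ℝ) < 1 - u := by linarith
  have hx1 : x₁ = σ * (1 + u) := by
    rw [hσ, hu]; field_simp; ring
  have hx2 : x₂ = σ * (1 - u) := by
    rw [hσ, hu]; field_simp; ring
  have hsq : (1 - u^2 : ℝ) = (1+u) * (1-u) := by ring
  have f1 : (1+u)^(m+d) = (1+u)^m * (1+u)^d := Real.rpow_add h1u m d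
  have f2 : (1-u)^(m+d) = (1-u)^m * (1-u)^d := Real.rpow_add h2u m d
  have f3 : (1-u^2)^m = (1+u)^m * (1-u)^m := by
    rw [hsq, Real.mul_rpow h1u.le h2u.le]
  have s1 : σ^(2*m+d) = σ^(m+d) * σ^m := by
    rw [← Real.rpow_add hσpos]; congr 1; ring
  have e1 : x₁^(m+d) * x₂^m = σ^(2*m+d) * ((1-u^2)^m * (1+u)^d) := by
    rw [hx1, hx2, Real.mul_rpow hσpos.le h1u.le, Real.mul_rpow hσpos.le h2u.le,
      f1, f3, s1]
    ring
  have e2 : x₂^(m+d) * x₁^m = σ^(2*m+d) * ((1-u^2)^m * (1-u)^d) := by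
    rw [hx1, hx2, Real.mul_rpow hσpos.le h1u.le, Real.mul_rpow hσpos.le h2u.le,
      f2, f3, s1]
    ring
  have e3 : (2:ℝ)^(1-(2*m+d)) * (x₁+x₂)^(2*m+d) = 2 * σ^(2*m+d) := by
    have hx12 : x₁ + x₂ = 2 * σ := by rw [hσ]; ring
    rw [hx12, Real.mul_rpow (by norm_num) hσpos.le, ← mul_assoc,
      ← Real.rpow_add (by norm_num : (0:ℝ) < 2)]
    norm_num
  rw [e1, e2, e3]
  have hK := lemK m d hm hd hcond u hu0 hu1
  have hσnn : (0:ℝ) ≤ σ^(2*m+d) := Real.rpow_nonneg hσpos.le _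
  nlinarith [mul_le_mul_of_nonneg_left hK hσnn]

theorem two_var_muirhead (a₁ a₂ : ℝ) (ha₁ : 0 ≤ a₁) (ha₂ : 0 ≤ a₂)
    (h : (a₁ - a₂)^2 ≤ a₁ + a₂) (hs : 0 < a₁ + a₂)
    (x₁ x₂ : ℝ) (hx₁ : 0 < x₁) (hx₂ : 0 < x₂) :
    x₁ ^ a₁ * x₂ ^ a₂ + x₂ ^ a₁ * x₁ ^ a₂
      ≤ (2 : ℝ) ^ (1 - a₁ - a₂) * (x₁ + x₂) ^ (a₁ + a₂) := by
  have hexp : (1 : ℝ) - a₁ - a₂ = 1 - (a₁ + a₂) := by ring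
  rcases le_total a₂ a₁ with hA | hA
  · have hcond : (a₁ - a₂)^2 ≤ 2*a₂ + (a₁ - a₂) := by nlinarith [h]
    rcases le_total x₂ x₁ with hX | hX
    · have := key a₂ (a₁ - a₂) ha₂ (by linarith) hcond x₁ x₂ hx₁ hx₂ hX
      rw [show a₂ + (a₁ - a₂) = a₁ by ring, show 2*a₂ + (a₁-a₂) = a₁+a₂ by ring] at this
      rw [hexp]; linarith
    · have := key a₂ (a₁ - a₂) ha₂ (by linarith) hcond x₂ x₁ hx₂ hx₁ hX
      rw [show a₂ + (a₁ - a₂) = a₁ by ring, show 2*a₂ + (a₁-a₂) = a₁+a₂ by ring,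
        add_comm x₂ x₁] at this
      rw [hexp]; linarith
  · have hcond : (a₂ - a₁)^2 ≤ 2*a₁ + (a₂ - a₁) := by nlinarith [h]
    rcases le_total x₂ x₁ with hX | hX
    · have := key a₁ (a₂ - a₁) ha₁ (by linarith) hcond x₁ x₂ hx₁ hx₂ hX
      rw [show a₁ + (a₂ - a₁) = a₂ by ring, show 2*a₁ + (a₂-a₁) = a₁+a₂ by ring] at this
      rw [hexp]; linarith [this]
    · have := key a₁ (a₂ - a₁) ha₁ (by linarith) hcond x₂ x₁ hx₂ hx₁ hX
      rw [show a₁ + (a₂ - a₁) = a₂ by ring, show 2*a₁ + (a₂-a₁) = a₁+a₂ by ring,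
        add_comm x₂ x₁] at this
      rw [hexp]; linarith [this]
end

section
/- Let m ≥ 1, and let a₁,…,a_m ≥ 0 with s := a₁ + ⋯ + a_m satisfying 0 < s ≤ 1. Then for all x₁,…,x_m ≥ 0 (with the convention 0^0 = 1), ∑_{σ ∈ S_m} x_{σ(1)}^{a₁} ⋯ x_{σ(m)}^{a_m} ≤ m! · m^{-s} · (x₁ + ⋯ + x_m)^s. -/
open Finset

lemma sum_perm_apply_aux {n : ℕ} (f : Fin (n + 1) → ℝ) (i : Fin (n + 1)) :
    ∑ σ : Equiv.Perm (Fin (n + 1)), f (σ i) = (Nat.factorial n : ℝ) * ∑ j, f j := by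
  have h1 : ∑ σ : Equiv.Perm (Fin (n + 1)), f (σ i)
      = ∑ σ : Equiv.Perm (Fin (n + 1)), f (σ 0) := by
    refine Fintype.sum_equiv (Equiv.mulRight (Equiv.swap 0 i)) _ _ fun σ => ?_
    simp [Equiv.Perm.mul_apply]
  rw [h1, ← Equiv.sum_comp Equiv.Perm.decomposeFin.symm (fun σ => f (σ 0)),
    Fintype.sum_prod_type]
  simp only [Equiv.Perm.decomposeFin_symm_apply_zero, Finset.sum_const, nsmul_eq_mul,
    Finset.card_univ, Fintype.card_perm, Fintype.card_fin, ← Finset.mul_sum]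

lemma sum_perm_apply {m : ℕ} (hm : 1 ≤ m) (f : Fin m → ℝ) (i : Fin m) :
    ∑ σ : Equiv.Perm (Fin m), f (σ i) = (Nat.factorial (m - 1) : ℝ) * ∑ j, f j := by
  obtain ⟨n, rfl⟩ : ∃ n, m = n + 1 := ⟨m - 1, (Nat.succ_pred_eq_of_pos hm).symm⟩
  simpa using sum_perm_apply_aux f i

theorem muirhead_K_small_s (m : ℕ) (hm : 1 ≤ m) (a x : Fin m → ℝ)
    (ha : ∀ i, 0 ≤ a i) (hs : 0 < ∑ i, a i) (hs1 : ∑ i, a i ≤ 1)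
    (hx : ∀ i, 0 ≤ x i) :
    ∑ σ : Equiv.Perm (Fin m), ∏ i, (x (σ i)) ^ (a i)
      ≤ (Nat.factorial m : ℝ) * (m : ℝ) ^ (-(∑ i, a i)) * (∑ i, x i) ^ (∑ i, a i) := by
  set s := ∑ i, a i with hsdef
  have hsne : s ≠ 0 := ne_of_gt hs
  have hmpos : (0:ℝ) < m := by exact_mod_cast hm
  -- Step 1: per-permutation AM-GM bound
  have step1 : ∀ σ : Equiv.Perm (Fin m),
      ∏ i, (x (σ i)) ^ (a i) ≤ ∑ i, (a i / s) * (x (σ i)) ^ s := by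
    intro σ
    have := Real.geom_mean_le_arith_mean_weighted Finset.univ
      (fun i => a i / s) (fun i => (x (σ i)) ^ s)
      (fun i _ => div_nonneg (ha i) hs.le)
      (by rw [← Finset.sum_div]; field_simp; rfl)
      (fun i _ => Real.rpow_nonneg (hx _) _)
    refine le_trans (le_of_eq ?_) this
    refine Finset.prod_congr rfl fun i _ => ?_
    show x (σ i) ^ a i = (x (σ i) ^ s) ^ (a i / s)
    rw [← Real.rpow_mul (hx _)]
    congr 1
    field_simp
  -- Step 2: sum over permutations
  have step2 : ∑ σ : Equiv.Perm (Fin m), ∏ i, (x (σ i)) ^ (a i)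
      ≤ (Nat.factorial (m - 1) : ℝ) * ∑ j, (x j) ^ s := by
    calc ∑ σ : Equiv.Perm (Fin m), ∏ i, (x (σ i)) ^ (a i)
        ≤ ∑ σ : Equiv.Perm (Fin m), ∑ i, (a i / s) * (x (σ i)) ^ s :=
          Finset.sum_le_sum fun σ _ => step1 σ
      _ = ∑ i, (a i / s) * ∑ σ : Equiv.Perm (Fin m), (x (σ i)) ^ s := by
          rw [Finset.sum_comm]
          exact Finset.sum_congr rfl fun i _ => by rw [Finset.mul_sum]
      _ = ∑ i, (a i / s) * ((Nat.factorial (m - 1) : ℝ) * ∑ j, (x j) ^ s) := by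
          exact Finset.sum_congr rfl fun i _ => by
            rw [sum_perm_apply hm (fun j => (x j) ^ s) i]
      _ = (Nat.factorial (m - 1) : ℝ) * ∑ j, (x j) ^ s := by
          rw [← Finset.sum_mul, ← Finset.sum_div]
          field_simp
          rfl
  -- Step 3: power mean inequality
  have step3 : ∑ j, (x j) ^ s ≤ (m : ℝ) * ((m:ℝ)⁻¹ * ∑ j, x j) ^ s := by
    have hp : (1:ℝ) ≤ 1 / s := by
      rw [le_div_iff₀ hs]; simpa using hs1
    have := Real.arith_mean_le_rpow_mean Finset.univ
      (fun _ => (m:ℝ)⁻¹) (fun j => (x j) ^ s)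
      (fun i _ => by positivity)
      (by simp [Finset.card_univ]; field_simp)
      (fun i _ => Real.rpow_nonneg (hx _) _) hp
    have heq : ∀ j : Fin m, ((x j) ^ s) ^ (1/s : ℝ) = x j := by
      intro j
      rw [← Real.rpow_mul (hx _), mul_one_div, div_self hsne, Real.rpow_one]
    rw [one_div_one_div] at this
    simp only [heq] at this
    rw [← Finset.mul_sum, ← Finset.mul_sum] at this
    have := mul_le_mul_of_nonneg_left this hmpos.le
    rwa [mul_inv_cancel_left₀ (ne_of_gt hmpos)] at this
  -- Combine
  have hfact : (Nat.factorial m : ℝ) = (m : ℝ) * (Nat.factorial (m - 1) : ℝ) := by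
    obtain ⟨n, rfl⟩ : ∃ n, m = n + 1 := ⟨m - 1, (Nat.succ_pred_eq_of_pos hm).symm⟩
    simp [Nat.factorial_succ]
  have hrw : ((m:ℝ)⁻¹ * ∑ j, x j) ^ s = (m:ℝ) ^ (-s) * (∑ j, x j) ^ s := by
    rw [Real.mul_rpow (by positivity) (Finset.sum_nonneg fun j _ => hx j),
      Real.inv_rpow hmpos.le, ← Real.rpow_neg hmpos.le]
  calc ∑ σ : Equiv.Perm (Fin m), ∏ i, (x (σ i)) ^ (a i)
      ≤ (Nat.factorial (m - 1) : ℝ) * ∑ j, (x j) ^ s := step2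
    _ ≤ (Nat.factorial (m - 1) : ℝ) * ((m : ℝ) * ((m:ℝ)⁻¹ * ∑ j, x j) ^ s) :=
        mul_le_mul_of_nonneg_left step3 (by positivity)
    _ = (Nat.factorial m : ℝ) * (m : ℝ) ^ (-s) * (∑ i, x i) ^ s := by
        rw [hfact, hrw]; ring
end

section
/- Let m ≥ 1, and let a₁,…,a_m ≥ 0 with s := a₁ + ⋯ + a_m ≥ 1. Then for all x₁,…,x_m ≥ 0 (with convention 0^0 = 1), ∑_{σ ∈ S_m} x_{σ(1)}^{a₁} ⋯ x_{σ(m)}^{a_m} ≤ (m-1)! · (x₁ + ⋯ + x_m)^s. -/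
open Finset Real

theorem muirhead_K_large_s (m : ℕ) (hm : 1 ≤ m) (a x : Fin m → ℝ)
    (ha : ∀ i, 0 ≤ a i) (hs : 1 ≤ ∑ i, a i)
    (hx : ∀ i, 0 ≤ x i) :
    ∑ σ : Equiv.Perm (Fin m), ∏ i, (x (σ i)) ^ (a i)
      ≤ (Nat.factorial (m - 1) : ℝ) * (∑ i, x i) ^ (∑ i, a i) := by
  set s := ∑ i, a i with hsdef
  set X := ∑ i, x i with hXdef
  have hs0 : (0:ℝ) < s := lt_of_lt_of_le one_pos hs
  have hX0 : 0 ≤ X := Finset.sum_nonneg fun i _ => hx i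
  have hTconst : ∀ i j : Fin m,
      (∑ σ : Equiv.Perm (Fin m), x (σ i)) = ∑ σ : Equiv.Perm (Fin m), x (σ j) := by
    intro i j
    exact Fintype.sum_equiv (Equiv.mulRight (Equiv.swap i j))
      (fun σ => x (σ i)) (fun σ => x (σ j)) (fun σ => by simp)
  have hT : ∀ i : Fin m,
      (∑ σ : Equiv.Perm (Fin m), x (σ i)) = (Nat.factorial (m - 1) : ℝ) * X := by
    intro i
    have h1 : ∑ j : Fin m, ∑ σ : Equiv.Perm (Fin m), x (σ j)
        = (Nat.factorial m : ℝ) * X := by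
      rw [Finset.sum_comm]
      have : ∀ σ : Equiv.Perm (Fin m), ∑ j : Fin m, x (σ j) = X :=
        fun σ => Fintype.sum_equiv σ _ _ (fun j => rfl)
      simp_rw [this, Finset.sum_const, Finset.card_univ, Fintype.card_perm,
        Fintype.card_fin, nsmul_eq_mul]
    have h2 : ∑ j : Fin m, ∑ σ : Equiv.Perm (Fin m), x (σ j)
        = (m : ℝ) * ∑ σ : Equiv.Perm (Fin m), x (σ i) := by
      rw [Finset.sum_congr rfl (fun j _ => hTconst j i), Finset.sum_const,
        Finset.card_univ, Fintype.card_fin, nsmul_eq_mul]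
    have hmf : (m : ℝ) * (Nat.factorial (m - 1) : ℝ) = (Nat.factorial m : ℝ) := by
      rw [← Nat.cast_mul, Nat.mul_factorial_pred (Nat.one_le_iff_ne_zero.mp hm)]
    have hm0 : (0:ℝ) < (m : ℝ) := by exact_mod_cast hm
    have h3 := h2.symm.trans h1
    rw [← hmf, mul_assoc] at h3
    exact mul_left_cancel₀ hm0.ne' h3
  have hwsum : ∑ i, a i / s = 1 := by
    rw [← Finset.sum_div, ← hsdef, div_self hs0.ne']
  have key : ∀ σ : Equiv.Perm (Fin m),
      ∏ i, x (σ i) ^ a i ≤ (∑ i, (a i / s) * x (σ i)) * X ^ (s - 1) := by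
    intro σ
    set W := ∑ i, (a i / s) * x (σ i) with hW
    have hW0 : 0 ≤ W :=
      Finset.sum_nonneg fun i _ => mul_nonneg (div_nonneg (ha i) hs0.le) (hx _)
    have hWX : W ≤ X := by
      calc W ≤ ∑ i, (a i / s) * X := by
              refine Finset.sum_le_sum fun i _ => ?_
              exact mul_le_mul_of_nonneg_left
                (Finset.single_le_sum (fun j _ => hx j) (Finset.mem_univ (σ i)))
                (div_nonneg (ha i) hs0.le)
        _ = X := by rw [← Finset.sum_mul, hwsum, one_mul]
    have amgm : ∏ i, x (σ i) ^ (a i / s) ≤ W :=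
      Real.geom_mean_le_arith_mean_weighted _ _ _
        (fun i _ => div_nonneg (ha i) hs0.le) hwsum (fun i _ => hx _)
    have h1 : ∏ i, x (σ i) ^ a i = (∏ i, x (σ i) ^ (a i / s)) ^ s := by
      rw [← Real.finset_prod_rpow _ _ (fun i _ => Real.rpow_nonneg (hx _) _)]
      refine Finset.prod_congr rfl fun i _ => ?_
      rw [← Real.rpow_mul (hx _), div_mul_cancel₀ _ hs0.ne']
    rw [h1]
    have hprod0 : 0 ≤ ∏ i, x (σ i) ^ (a i / s) :=
      Finset.prod_nonneg fun i _ => Real.rpow_nonneg (hx _) _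
    calc (∏ i, x (σ i) ^ (a i / s)) ^ s ≤ W ^ s :=
          Real.rpow_le_rpow hprod0 amgm hs0.le
      _ ≤ W * X ^ (s - 1) := by
          rcases eq_or_lt_of_le hW0 with h0 | hWpos
          · rw [← h0, Real.zero_rpow hs0.ne', zero_mul]
          · have hWs : W ^ s = W * W ^ (s - 1) := by
              nth_rewrite 1 [show s = 1 + (s - 1) by ring]
              rw [Real.rpow_add hWpos, Real.rpow_one]
            rw [hWs]
            exact mul_le_mul_of_nonneg_left
              (Real.rpow_le_rpow hW0 hWX (by linarith)) hW0
  calc ∑ σ : Equiv.Perm (Fin m), ∏ i, x (σ i) ^ a i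
      ≤ ∑ σ : Equiv.Perm (Fin m), (∑ i, (a i / s) * x (σ i)) * X ^ (s - 1) :=
        Finset.sum_le_sum fun σ _ => key σ
    _ = (∑ σ : Equiv.Perm (Fin m), ∑ i, (a i / s) * x (σ i)) * X ^ (s - 1) :=
        (Finset.sum_mul _ _ _).symm
    _ = ((Nat.factorial (m - 1) : ℝ) * X) * X ^ (s - 1) := by
        rw [Finset.sum_comm]
        have h4 : ∀ i : Fin m, ∑ σ : Equiv.Perm (Fin m), (a i / s) * x (σ i)
            = (a i / s) * ((Nat.factorial (m - 1) : ℝ) * X) := by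
          intro i; rw [← Finset.mul_sum, hT i]
        rw [Finset.sum_congr rfl fun i _ => h4 i, ← Finset.sum_mul, hwsum, one_mul]
    _ = (Nat.factorial (m - 1) : ℝ) * X ^ s := by
        rcases eq_or_lt_of_le hX0 with h0 | hXpos
        · rw [← h0, Real.zero_rpow hs0.ne']; simp
        · rw [mul_assoc, ← Real.rpow_one_add' hXpos.le (by intro h; linarith)]
          ring_nf
end

section
/- Let α₁, α₂ ∈ [1,2] with 1/α₁ + 1/α₂ > 1, and let β > 0 satisfy 1/β = 1/α₁ + 1/α₂ − 1. Then for all x₁, x₂ > 0, (x₁^{β/α₁} x₂^{β/α₂} + x₂^{β/α₁} x₁^{β/α₂})^{1/β} ≤ (1/2)(x₁ + x₂)^{1/α₁ + 1/α₂}. -/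
open Real

/-- Midpoint concavity of `rpow` for exponent in `[0,1]`. -/
lemma rpow_add_le_two_mul_mid (r : ℝ) (hr0 : 0 ≤ r) (hr1 : r ≤ 1)
    {x y : ℝ} (hx : 0 ≤ x) (hy : 0 ≤ y) :
    x ^ r + y ^ r ≤ 2 * ((x + y) / 2) ^ r := by
  have h := (Real.concaveOn_rpow hr0 hr1).2 (Set.mem_Ici.2 hx) (Set.mem_Ici.2 hy)
    (by norm_num : (0:ℝ) ≤ 1/2) (by norm_num : (0:ℝ) ≤ 1/2) (by norm_num)
  simp only [smul_eq_mul] at h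
  have : (1/2 : ℝ) * x + (1/2) * y = (x + y) / 2 := by ring
  rw [this] at h
  linarith

/-- Two-variable Muirhead-type bound, assuming `q ≤ p` and `p - q ≤ 1`. -/
lemma key_bound (p q : ℝ) (hq : 0 < q) (hpq : q ≤ p) (hr : p - q ≤ 1)
    {x y : ℝ} (hx : 0 < x) (hy : 0 < y) :
    x ^ p * y ^ q + y ^ p * x ^ q ≤ 2 ^ (1 - (p + q)) * (x + y) ^ (p + q) := by
  set r := p - q with hrdef
  set m := (x + y) / 2 with hm
  have hm0 : 0 < m := by positivity
  have hxp : x ^ p = x ^ q * x ^ r := by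
    rw [← Real.rpow_add hx]; congr 1; linarith
  have hyp : y ^ p = y ^ q * y ^ r := by
    rw [← Real.rpow_add hy]; congr 1; linarith
  have hxy : x ^ p * y ^ q + y ^ p * x ^ q = (x * y) ^ q * (x ^ r + y ^ r) := by
    rw [hxp, hyp, Real.mul_rpow hx.le hy.le]; ring
  have h1 : (x * y) ^ q ≤ (m ^ (2:ℝ)) ^ q := by
    apply Real.rpow_le_rpow (by positivity) _ hq.le
    rw [show (2:ℝ) = ((2:ℕ):ℝ) by norm_num, Real.rpow_natCast]
    nlinarith [sq_nonneg (x - y)]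
  have h2 : x ^ r + y ^ r ≤ 2 * m ^ r :=
    rpow_add_le_two_mul_mid r (by linarith) hr hx.le hy.le
  have h3 : x ^ p * y ^ q + y ^ p * x ^ q ≤ (m ^ (2:ℝ)) ^ q * (2 * m ^ r) := by
    rw [hxy]
    have hpos : (0:ℝ) ≤ x ^ r + y ^ r := by positivity
    calc (x * y) ^ q * (x ^ r + y ^ r) ≤ (m ^ (2:ℝ)) ^ q * (x ^ r + y ^ r) :=
          mul_le_mul_of_nonneg_right h1 hpos
      _ ≤ (m ^ (2:ℝ)) ^ q * (2 * m ^ r) :=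
          mul_le_mul_of_nonneg_left h2 (by positivity)
  have h4 : (m ^ (2:ℝ)) ^ q * (2 * m ^ r) = 2 * m ^ (p + q) := by
    rw [← Real.rpow_mul hm0.le,
      show p + q = 2 * q + r by rw [hrdef]; ring, Real.rpow_add hm0]
    ring
  have h5 : 2 * m ^ (p + q) = 2 ^ (1 - (p + q)) * (x + y) ^ (p + q) := by
    rw [hm, Real.div_rpow (by positivity) (by norm_num), Real.rpow_sub (by norm_num),
      Real.rpow_one]
    field_simp
  calc x ^ p * y ^ q + y ^ p * x ^ q ≤ (m ^ (2:ℝ)) ^ q * (2 * m ^ r) := h3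
    _ = 2 * m ^ (p + q) := h4
    _ = 2 ^ (1 - (p + q)) * (x + y) ^ (p + q) := h5

/-- Symmetric version without the order assumption. -/
lemma key_bound' (p q : ℝ) (hp : 0 < p) (hq : 0 < q) (hr : |p - q| ≤ 1)
    {x y : ℝ} (hx : 0 < x) (hy : 0 < y) :
    x ^ p * y ^ q + y ^ p * x ^ q ≤ 2 ^ (1 - (p + q)) * (x + y) ^ (p + q) := by
  rw [abs_le] at hr
  rcases le_total q p with h | h
  · exact key_bound p q hq h hr.2 hx hy
  · have := key_bound q p hp h (by linarith) hx hy
    calc x ^ p * y ^ q + y ^ p * x ^ q = x ^ q * y ^ p + y ^ q * x ^ p := by ring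
      _ ≤ 2 ^ (1 - (q + p)) * (x + y) ^ (q + p) := this
      _ = 2 ^ (1 - (p + q)) * (x + y) ^ (p + q) := by rw [add_comm q p]

theorem binary_step_bound (α₁ α₂ β : ℝ)
    (h₁ : α₁ ∈ Set.Icc (1:ℝ) 2) (h₂ : α₂ ∈ Set.Icc (1:ℝ) 2)
    (hsum : 1 < 1/α₁ + 1/α₂) (hβ : 0 < β)
    (hβdef : 1/β = 1/α₁ + 1/α₂ - 1)
    (x₁ x₂ : ℝ) (hx₁ : 0 < x₁) (hx₂ : 0 < x₂) :
    (x₁ ^ (β/α₁) * x₂ ^ (β/α₂) + x₂ ^ (β/α₁) * x₁ ^ (β/α₂)) ^ (1/β)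
      ≤ (1/2) * (x₁ + x₂) ^ (1/α₁ + 1/α₂) := by
  obtain ⟨ha1, ha1'⟩ := h₁
  obtain ⟨ha2, ha2'⟩ := h₂
  have hα₁ : 0 < α₁ := by linarith
  have hα₂ : 0 < α₂ := by linarith
  set p := β / α₁ with hp
  set q := β / α₂ with hq
  have hp0 : 0 < p := by positivity
  have hq0 : 0 < q := by positivity
  have hsumeq : p + q = 1 + β := by
    have h : 1 / β * β = (1/α₁ + 1/α₂ - 1) * β := by rw [hβdef]
    rw [one_div, inv_mul_cancel₀ hβ.ne'] at h
    field_simp [hp, hq]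
    field_simp at h
    rw [hp, hq, div_add_div _ _ hα₁.ne' hα₂.ne', div_eq_iff (by positivity)]
    nlinarith [h]
  have hq2 : β / 2 ≤ q := by
    rw [hq]; exact div_le_div_of_nonneg_left hβ.le hα₂ ha2'
  have hp2 : β / 2 ≤ p := by
    rw [hp]; exact div_le_div_of_nonneg_left hβ.le hα₁ ha1'
  have hpb : p ≤ β := by
    rw [hp]; calc β / α₁ ≤ β / 1 := div_le_div_of_nonneg_left hβ.le one_pos ha1
      _ = β := by ring
  have hqb : q ≤ β := by
    rw [hq]; calc β / α₂ ≤ β / 1 := div_le_div_of_nonneg_left hβ.le one_pos ha2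
      _ = β := by ring
  have hr : |p - q| ≤ 1 := by
    rw [abs_le]
    constructor <;> nlinarith
  have hkey := key_bound' p q hp0 hq0 hr hx₁ hx₂
  have hLpos : (0:ℝ) < x₁ ^ p * x₂ ^ q + x₂ ^ p * x₁ ^ q := by positivity
  have hmono := Real.rpow_le_rpow hLpos.le hkey (by positivity : (0:ℝ) ≤ 1/β)
  refine hmono.trans_eq ?_
  rw [Real.mul_rpow (by positivity) (by positivity),
    ← Real.rpow_mul (by norm_num : (0:ℝ) ≤ 2), ← Real.rpow_mul (by positivity : (0:ℝ) ≤ x₁ + x₂)]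
  have e1 : (1 - (p + q)) * (1/β) = -1 := by
    rw [hsumeq]; field_simp; ring
  have e2 : (p + q) * (1/β) = 1/α₁ + 1/α₂ := by
    have h : (1 + β) * (1/β) = 1/β + 1 := by field_simp
    rw [hsumeq, h, hβdef]; ring
  rw [e1, e2, Real.rpow_neg_one]
  norm_num
end

section
/- (m-ary tree, n = 2 case) Let T be the rooted m-ary tree of k levels with free vertices T₀ = {1,…,m}^k, nonnegative weights μ on T₀, and μ(C_j) = ∑_{i ∈ T₀, j ⪯ i} μ(i). Let f : T → ℝ₊ and fix a level 0 ≤ L ≤ k−1. Then ∑ μ(i₁) μ(i₂) f(i₁ ∧ i₂), over ordered pairs of distinct i₁, i₂ ∈ T₀ with |i₁ ∧ i₂| = L, is at most (1 − 1/m) ∑_{|j| = L} f(j) μ(C_j)². -/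
theorem mary_tree_pair_energy (m : ℕ) (hm : 2 ≤ m) (k L : ℕ) (hL : L < k)
    (μ : (Fin k → Fin m) → ℝ) (hμ : ∀ i, 0 ≤ μ i)
    (f : (Fin L → Fin m) → ℝ) (hf : ∀ j, 0 ≤ f j) :
    ∑ p ∈ Finset.univ.filter (fun p : (Fin k → Fin m) × (Fin k → Fin m) =>
        (∀ t : Fin k, (t : ℕ) < L → p.1 t = p.2 t) ∧ p.1 ⟨L, hL⟩ ≠ p.2 ⟨L, hL⟩),
      μ p.1 * μ p.2 * f (fun t => p.1 (Fin.castLE hL.le t))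
    ≤ (1 - 1/(m : ℝ)) * ∑ j : Fin L → Fin m,
        f j * (∑ i ∈ Finset.univ.filter
          (fun i : Fin k → Fin m => ∀ t : Fin L, i (Fin.castLE hL.le t) = j t), μ i) ^ 2 := by
  classical
  have hm0 : (0:ℝ) < m := by exact_mod_cast Nat.lt_of_lt_of_le Nat.zero_lt_two hm
  set L' : Fin k := ⟨L, hL⟩ with hL'
  set pre : (Fin k → Fin m) → (Fin L → Fin m) := fun i t => i (Fin.castLE hL.le t) with hpre
  set A : (Fin L → Fin m) → Fin m → Finset (Fin k → Fin m) :=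
    fun j a => Finset.univ.filter (fun i => pre i = j ∧ i L' = a) with hA
  set S : (Fin L → Fin m) → Fin m → ℝ := fun j a => ∑ i ∈ A j a, μ i with hS
  set T : (Fin L → Fin m) → ℝ := fun j => ∑ a, S j a with hT
  set P : (Fin k → Fin m) × (Fin k → Fin m) → Prop := fun p =>
    (∀ t : Fin k, (t : ℕ) < L → p.1 t = p.2 t) ∧ p.1 L' ≠ p.2 L' with hP
  -- agreement below L is the same as equality of prefixes
  have hagree : ∀ p : (Fin k → Fin m) × (Fin k → Fin m),
      (∀ t : Fin k, (t : ℕ) < L → p.1 t = p.2 t) ↔ pre p.1 = pre p.2 := by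
    intro p
    constructor
    · intro h; funext t
      exact h _ (by simpa using t.isLt)
    · intro h t ht
      have := congrFun h ⟨t, ht⟩
      have ht' : Fin.castLE hL.le ⟨(t : ℕ), ht⟩ = t := Fin.ext rfl
      simpa [pre, ht'] using this
  -- the LHS rewritten per prefix
  have key : ∑ p ∈ Finset.univ.filter P,
      μ p.1 * μ p.2 * f (fun t => p.1 (Fin.castLE hL.le t))
      = ∑ j : Fin L → Fin m, f j * ((T j)^2 - ∑ a, (S j a)^2) := by
    rw [← Finset.sum_fiberwise (Finset.univ.filter P) (fun p => pre p.1)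
      (fun p => μ p.1 * μ p.2 * f (fun t => p.1 (Fin.castLE hL.le t)))]
    refine Finset.sum_congr rfl fun j _ => ?_
    have hfj : ∀ p ∈ (Finset.univ.filter P).filter (fun p => pre p.1 = j),
        μ p.1 * μ p.2 * f (fun t => p.1 (Fin.castLE hL.le t)) = μ p.1 * μ p.2 * f j := by
      intro p hp
      have := (Finset.mem_filter.mp hp).2
      rw [show (fun t => p.1 (Fin.castLE hL.le t)) = pre p.1 from rfl, this]
    rw [Finset.sum_congr rfl hfj]
    have : ∑ p ∈ (Finset.univ.filter P).filter (fun p => pre p.1 = j),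
        μ p.1 * μ p.2 * f j = f j * ∑ p ∈ (Finset.univ.filter P).filter (fun p => pre p.1 = j),
        μ p.1 * μ p.2 := by
      rw [Finset.mul_sum]; exact Finset.sum_congr rfl fun p _ => by ring
    rw [this]
    congr 1
    -- now the pair sum over the fiber
    rw [← Finset.sum_fiberwise ((Finset.univ.filter P).filter (fun p => pre p.1 = j))
      (fun p => (p.1 L', p.2 L')) (fun p => μ p.1 * μ p.2)]
    have fib : ∀ ab : Fin m × Fin m,
        ((Finset.univ.filter P).filter (fun p => pre p.1 = j)).filter
          (fun p => (p.1 L', p.2 L') = ab)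
        = if ab.1 = ab.2 then ∅ else (A j ab.1) ×ˢ (A j ab.2) := by
      intro ab
      by_cases hd : ab.1 = ab.2
      · rw [if_pos hd]
        ext p
        simp only [Finset.notMem_empty, iff_false, Finset.mem_filter, Finset.mem_univ,
          true_and, P]
        rintro ⟨⟨⟨_, hne⟩, _⟩, hab⟩
        apply hne
        have h1 : p.1 L' = ab.1 := (Prod.mk.injEq _ _ _ _ ▸ hab).1
        have h2 : p.2 L' = ab.2 := (Prod.mk.injEq _ _ _ _ ▸ hab).2
        rw [h1, h2, hd]
      · rw [if_neg hd]
        ext p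
        simp only [Finset.mem_product, Finset.mem_filter, Finset.mem_univ, true_and, P, A]
        constructor
        · rintro ⟨⟨⟨hag, hne⟩, hpj⟩, hab⟩
          have h1 : p.1 L' = ab.1 := (Prod.mk.injEq _ _ _ _ ▸ hab).1
          have h2 : p.2 L' = ab.2 := (Prod.mk.injEq _ _ _ _ ▸ hab).2
          have hp2 : pre p.2 = j := by rw [← (hagree p).mp hag]; exact hpj
          exact ⟨⟨hpj, h1⟩, ⟨hp2, h2⟩⟩
        · rintro ⟨⟨hp1, h1⟩, ⟨hp2, h2⟩⟩
          refine ⟨⟨⟨(hagree p).mpr (hp1.trans hp2.symm), ?_⟩, hp1⟩, by rw [h1, h2]⟩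
          rw [h1, h2]; exact hd
    have fibsum : ∀ ab : Fin m × Fin m,
        ∑ p ∈ ((Finset.univ.filter P).filter (fun p => pre p.1 = j)).filter
          (fun p => (p.1 L', p.2 L') = ab), μ p.1 * μ p.2
        = if ab.1 = ab.2 then 0 else S j ab.1 * S j ab.2 := by
      intro ab
      rw [fib ab]
      by_cases hd : ab.1 = ab.2
      · simp [hd]
      · rw [if_neg hd, if_neg hd, Finset.sum_product, hS]
        rw [Finset.sum_mul_sum]
    rw [Finset.sum_congr rfl (fun ab _ => fibsum ab)]
    -- now pure algebra over Fin m × Fin m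
    rw [Fintype.sum_prod_type]
    have : ∀ a : Fin m, ∑ b : Fin m, (if a = b then (0:ℝ) else S j a * S j b)
        = S j a * T j - (S j a)^2 := by
      intro a
      have : ∀ b : Fin m, (if a = b then (0:ℝ) else S j a * S j b)
          = S j a * S j b - (if a = b then S j a * S j b else 0) := by
        intro b; by_cases h : a = b <;> simp [h]
      rw [Finset.sum_congr rfl (fun b _ => this b), Finset.sum_sub_distrib,
        Finset.sum_ite_eq, ← Finset.mul_sum]
      simp [hT, sq]
    rw [Finset.sum_congr rfl (fun a _ => this a), Finset.sum_sub_distrib, ← Finset.sum_mul]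
    rw [show (∑ i : Fin m, S j i) = T j from rfl]
    ring
  rw [key]
  -- rewrite the RHS inner sums as T j
  have hTj : ∀ j : Fin L → Fin m,
      (∑ i ∈ Finset.univ.filter
        (fun i : Fin k → Fin m => ∀ t : Fin L, i (Fin.castLE hL.le t) = j t), μ i) = T j := by
    intro j
    have hset : Finset.univ.filter
        (fun i : Fin k → Fin m => ∀ t : Fin L, i (Fin.castLE hL.le t) = j t)
        = Finset.univ.filter (fun i => pre i = j) := by
      ext i; simp [pre, funext_iff]
    rw [hset, hT]
    rw [← Finset.sum_fiberwise (Finset.univ.filter (fun i => pre i = j))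
      (fun i => i L') μ]
    refine Finset.sum_congr rfl fun a _ => ?_
    congr 1
    rw [Finset.filter_filter]
  conv_rhs => rw [Finset.sum_congr rfl (fun j _ => by rw [hTj j])]
  rw [Finset.mul_sum]
  refine Finset.sum_le_sum fun j _ => ?_
  -- pointwise inequality
  have hQ : (T j)^2 ≤ (m:ℝ) * ∑ a, (S j a)^2 := by
    have := sq_sum_le_card_mul_sum_sq (s := (Finset.univ : Finset (Fin m))) (f := S j)
    simpa [hT] using this
  have h1 : (T j)^2 - ∑ a, (S j a)^2 ≤ (1 - 1/(m:ℝ)) * (T j)^2 := by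
    have h2 : (1/(m:ℝ)) * (T j)^2 ≤ ∑ a, (S j a)^2 := by
      rw [div_mul_eq_mul_div, one_mul, div_le_iff₀ hm0]
      linarith [hQ]
    nlinarith [h2]
  calc f j * ((T j)^2 - ∑ a, (S j a)^2) ≤ f j * ((1 - 1/(m:ℝ)) * (T j)^2) :=
        mul_le_mul_of_nonneg_left h1 (hf j)
    _ = (1 - 1/(m:ℝ)) * (f j * (T j)^2) := by ring
end

section
/- Let β ≥ 1 and x₁,…,x_m ≥ 0 with exponents b₁,…,b_m ≥ 0 summing to s ≥ 1 where each b_i ≥ (s−1)/m. Then (1/m!) ∑_{σ ∈ S_m} x_{σ(1)}^{b₁}⋯x_{σ(m)}^{b_m} ≤ ((x₁+⋯+x_m)/m)^s, i.e. the symmetric mean of the monomials is at most the s-th power of the arithmetic mean. -/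
open Finset Real

theorem symmetric_mean_bound (β : ℝ) (hβ : 1 ≤ β)
    (m : ℕ) (hm : 1 ≤ m) (b x : Fin m → ℝ)
    (hb : ∀ i, 0 ≤ b i) (hs : 1 ≤ ∑ i, b i)
    (hbal : ∀ i, (∑ j, b j - 1) / m ≤ b i)
    (hx : ∀ i, 0 ≤ x i) :
    (1 / (Nat.factorial m : ℝ)) * ∑ σ : Equiv.Perm (Fin m), ∏ i, (x (σ i)) ^ (b i)
      ≤ ((∑ i, x i) / m) ^ (∑ i, b i) := by
  have hm0 : (0:ℝ) < m := by exact_mod_cast hm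
  set s : ℝ := ∑ i, b i with hsdef
  set t : ℝ := (s - 1) / m with htdef
  have ht0 : 0 ≤ t := div_nonneg (by linarith) hm0.le
  set c : Fin m → ℝ := fun i => b i - t with hcdef
  have hc0 : ∀ i, 0 ≤ c i := fun i => sub_nonneg.2 (hbal i)
  have hcsum : ∑ i, c i = 1 := by
    have : ∑ i : Fin m, c i = s - (m : ℝ) * t := by
      simp [hcdef, Finset.sum_sub_distrib, mul_comm]; rfl
    rw [this, htdef]
    field_simp
    ring
  set A : ℝ := (∑ i, x i) / m with hAdef
  have hA0 : 0 ≤ A := div_nonneg (Finset.sum_nonneg fun i _ => hx i) hm0.le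
  have hP0 : 0 ≤ ∏ j, x j := Finset.prod_nonneg fun j _ => hx j
  -- per-permutation bound
  have hsplit : ∀ σ : Equiv.Perm (Fin m), ∏ i, (x (σ i)) ^ (b i)
      ≤ (∏ j, x j) ^ t * ∑ i, c i * x (σ i) := by
    intro σ
    have h1 : ∏ i, (x (σ i)) ^ (b i)
        = (∏ j, x j) ^ t * ∏ i, (x (σ i)) ^ (c i) := by
      have hterm : ∀ i : Fin m, (x (σ i)) ^ (b i)
          = (x (σ i)) ^ t * (x (σ i)) ^ (c i) := by
        intro i
        rcases eq_or_ne (b i) 0 with h0 | h0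
        · have ht' : t = 0 := le_antisymm (h0 ▸ hbal i) ht0
          have hc' : c i = 0 := by simp [hcdef, h0, ht']
          simp [h0, ht', hc']
        · have : t + c i = b i := by simp [hcdef]
          rw [← this, Real.rpow_add' (hx _) (by rw [this]; exact h0)]
      rw [Finset.prod_congr rfl fun i _ => hterm i, Finset.prod_mul_distrib,
        Real.finset_prod_rpow _ _ (fun i _ => hx _) t, Equiv.prod_comp σ x]
    rw [h1]
    refine mul_le_mul_of_nonneg_left ?_ (Real.rpow_nonneg hP0 t)
    exact Real.geom_mean_le_arith_mean_weighted univ c (fun i => x (σ i))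
      (fun i _ => hc0 i) hcsum (fun i _ => hx _)
  -- counting: for every i, ∑ over σ of x (σ i) equals m! * A
  have hconst : ∀ i j : Fin m,
      (∑ σ : Equiv.Perm (Fin m), x (σ i)) = ∑ σ : Equiv.Perm (Fin m), x (σ j) := by
    intro i j
    have := Equiv.sum_comp (Equiv.mulRight (Equiv.swap i j))
      (fun τ : Equiv.Perm (Fin m) => x (τ i))
    simpa [Equiv.Perm.mul_apply, Equiv.swap_apply_left] using this.symm
  have i0 : Fin m := ⟨0, hm⟩
  have hcount : ∀ i : Fin m,
      (∑ σ : Equiv.Perm (Fin m), x (σ i)) = (Nat.factorial m : ℝ) * A := by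
    have htot : (m : ℝ) * (∑ σ : Equiv.Perm (Fin m), x (σ i0))
        = (Nat.factorial m : ℝ) * ∑ j, x j := by
      have h1 : ∑ i : Fin m, ∑ σ : Equiv.Perm (Fin m), x (σ i)
          = ∑ σ : Equiv.Perm (Fin m), ∑ i, x (σ i) := Finset.sum_comm
      have h2 : ∑ i : Fin m, ∑ σ : Equiv.Perm (Fin m), x (σ i)
          = (m : ℝ) * ∑ σ : Equiv.Perm (Fin m), x (σ i0) := by
        rw [Finset.sum_congr rfl fun i _ => hconst i i0]
        simp [mul_comm]
      have h3 : ∑ σ : Equiv.Perm (Fin m), ∑ i, x (σ i)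
          = (Nat.factorial m : ℝ) * ∑ j, x j := by
        rw [Finset.sum_congr rfl fun σ _ => Equiv.sum_comp σ x]
        simp [Finset.card_univ, Fintype.card_perm, mul_comm]
      rw [← h2, h1, h3]
    intro i
    rw [hconst i i0]
    have := htot
    field_simp [hAdef] at this ⊢
    rw [hAdef, mul_div_assoc', eq_div_iff hm0.ne']; linear_combination this
  -- assemble
  have hsum : ∑ σ : Equiv.Perm (Fin m), ∏ i, (x (σ i)) ^ (b i)
      ≤ (∏ j, x j) ^ t * ((Nat.factorial m : ℝ) * A) := by
    calc ∑ σ : Equiv.Perm (Fin m), ∏ i, (x (σ i)) ^ (b i)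
        ≤ ∑ σ : Equiv.Perm (Fin m), (∏ j, x j) ^ t * ∑ i, c i * x (σ i) :=
          Finset.sum_le_sum fun σ _ => hsplit σ
      _ = (∏ j, x j) ^ t * ∑ σ : Equiv.Perm (Fin m), ∑ i, c i * x (σ i) := by
          rw [Finset.mul_sum]
      _ = (∏ j, x j) ^ t * ((Nat.factorial m : ℝ) * A) := by
          congr 1
          rw [Finset.sum_comm]
          calc ∑ i, ∑ σ : Equiv.Perm (Fin m), c i * x (σ i)
              = ∑ i : Fin m, c i * ((Nat.factorial m : ℝ) * A) := by
                refine Finset.sum_congr rfl fun i _ => ?_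
                rw [← Finset.mul_sum, hcount i]
            _ = (Nat.factorial m : ℝ) * A := by
                rw [← Finset.sum_mul, hcsum, one_mul]
  have hfac0 : (0:ℝ) < (Nat.factorial m : ℝ) := by
    exact_mod_cast Nat.factorial_pos m
  have hstep : (1 / (Nat.factorial m : ℝ)) * ∑ σ : Equiv.Perm (Fin m), ∏ i, (x (σ i)) ^ (b i)
      ≤ (∏ j, x j) ^ t * A := by
    rw [div_mul_eq_mul_div, one_mul, div_le_iff₀ hfac0]
    calc ∑ σ : Equiv.Perm (Fin m), ∏ i, (x (σ i)) ^ (b i)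
        ≤ (∏ j, x j) ^ t * ((Nat.factorial m : ℝ) * A) := hsum
      _ = (∏ j, x j) ^ t * A * (Nat.factorial m : ℝ) := by ring
  refine hstep.trans ?_
  -- (∏ x)^t * A ≤ A^s
  have hGM : (∏ j, x j) ^ ((1:ℝ)/m) ≤ A := by
    have h := Real.geom_mean_le_arith_mean_weighted univ (fun _ => (1:ℝ)/m) x
      (fun i _ => by positivity) (by simp; field_simp) (fun i _ => hx i)
    rw [Real.finset_prod_rpow _ _ (fun i _ => hx i) _] at h
    calc (∏ j, x j) ^ ((1:ℝ)/m) ≤ ∑ i : Fin m, (1/(m:ℝ)) * x i := h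
      _ = A := by rw [← Finset.mul_sum, hAdef]; ring
  have h1 : (∏ j, x j) ^ t ≤ A ^ (s - 1) := by
    have ht' : t = (1/(m:ℝ)) * (s - 1) := by rw [htdef]; ring
    rw [ht', Real.rpow_mul hP0]
    exact Real.rpow_le_rpow (Real.rpow_nonneg hP0 _) hGM (by linarith)
  calc (∏ j, x j) ^ t * A ≤ A ^ (s - 1) * A :=
        mul_le_mul_of_nonneg_right h1 hA0
    _ = A ^ (s - 1) * A ^ (1:ℝ) := by rw [Real.rpow_one]
    _ = A ^ (s - 1 + 1) := (Real.rpow_add' hA0 (by intro h; rw [show s - 1 + 1 = s by ring] at h; linarith)).symm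
    _ = A ^ s := by ring_nf
end
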